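/- Let A be a Banach algebra with a bounded left approximate identity and B a Banach A-bimodule with A·B** ⊆ B and B**·A ⊆ B. If every continuous derivation from A into B* is inner, then every continuous derivation from A into B^(2n+1) is inner for each n ≥ 0. -/

import Mathlib

open ContinuousLinearMap NormedSpace

noncomputable section

instance instNACGStrongDual (E : Type) [NormedAddCommGroup E] [NormedSpace ℝ E] :
    NormedAddCommGroup (StrongDual ℝ E) := inferInstance

instance instNSStrongDual (E : Type) [NormedAddCommGroup E] [NormedSpace ℝ E] :
    NormedSpace ℝ (StrongDual ℝ E) := inferInstance

section Defs

variable {X Y Z W : Type} [NormedAddCommGroup X] [NormedSpace ℝ X]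
  [NormedAddCommGroup Y] [NormedSpace ℝ Y] [NormedAddCommGroup Z] [NormedSpace ℝ Z]
  [NormedAddCommGroup W] [NormedSpace ℝ W]

/-- The first adjoint `m^*` of a bounded bilinear map `m : X × Y → Z`,
as a map `Z^* × X → Y^*`, `⟨m^*(z',x), y⟩ = ⟨z', m(x,y)⟩`. -/
def adj1 (m : X →L[ℝ] Y →L[ℝ] Z) :
    StrongDual ℝ Z →L[ℝ] X →L[ℝ] StrongDual ℝ Y :=
  (((ContinuousLinearMap.compL ℝ X (Y →L[ℝ] Z) (StrongDual ℝ Y)).flip m).comp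
    (ContinuousLinearMap.compL ℝ Y Z ℝ))

@[simp] lemma adj1_apply (m : X →L[ℝ] Y →L[ℝ] Z) (z' : StrongDual ℝ Z) (x : X) (y : Y) :
    adj1 m z' x y = z' (m x y) := rfl

/-- The first (left) Arens extension `m^{***} : X^{**} × Y^{**} → Z^{**}` of a
bounded bilinear map `m : X × Y → Z`. -/
def arens (m : X →L[ℝ] Y →L[ℝ] Z) :
    StrongDual ℝ (StrongDual ℝ X) →L[ℝ] StrongDual ℝ (StrongDual ℝ Y) →L[ℝ] StrongDual ℝ (StrongDual ℝ Z) :=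
  adj1 (adj1 (adj1 m))

/-- The adjoint (dual map) of a bounded linear map. -/
def dualMap' (D : X →L[ℝ] Y) : StrongDual ℝ Y →L[ℝ] StrongDual ℝ X :=
  (ContinuousLinearMap.compL ℝ X Y ℝ).flip D

@[simp] lemma dualMap'_apply (D : X →L[ℝ] Y) (g : StrongDual ℝ Y) (x : X) :
    dualMap' D g x = g (D x) := rfl

/-- The second adjoint `D'' : X^{**} → Y^{**}` of a bounded linear map. -/
def bidualMap (D : X →L[ℝ] Y) : StrongDual ℝ (StrongDual ℝ X) →L[ℝ] StrongDual ℝ (StrongDual ℝ Y) :=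
  dualMap' (dualMap' D)

/-- Given an action `t : A × X → X`, the transposed action on the dual `X^*`:
`(dualAct t) a f = f ∘ (t a)`. -/
def dualAct (t : W →L[ℝ] X →L[ℝ] X) : W →L[ℝ] StrongDual ℝ X →L[ℝ] StrongDual ℝ X :=
  ((ContinuousLinearMap.compL ℝ X X ℝ).flip).comp t

@[simp] lemma dualAct_apply (t : W →L[ℝ] X →L[ℝ] X) (a : W) (f : StrongDual ℝ X) (x : X) :
    dualAct t a f x = f (t a x) := rfl

/-- `D : A → X` is a derivation with respect to the multiplication `mul'` on `A`
and the left action `l` and right action `r` (`r a x` means `x · a`) of `A` on `X`. -/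
def IsDer {A' : Type} [NormedAddCommGroup A'] [NormedSpace ℝ A']
    (mul' : A' →L[ℝ] A' →L[ℝ] A') (l r : A' →L[ℝ] X →L[ℝ] X) (D : A' →L[ℝ] X) : Prop :=
  ∀ a b : A', D (mul' a b) = l a (D b) + r b (D a)

/-- `D : A → X` is an inner derivation: `D a = a·x - x·a` for some `x`. -/
def IsInner {A' : Type} [NormedAddCommGroup A'] [NormedSpace ℝ A']
    (l r : A' →L[ℝ] X →L[ℝ] X) (D : A' →L[ℝ] X) : Prop :=
  ∃ x : X, ∀ a : A', D a = l a x - r a x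

/-- The bimodule axioms for actions `l`, `r` of an algebra with multiplication `mul'`. -/
def IsBimod {A' : Type} [NormedAddCommGroup A'] [NormedSpace ℝ A']
    (mul' : A' →L[ℝ] A' →L[ℝ] A') (l r : A' →L[ℝ] X →L[ℝ] X) : Prop :=
  (∀ a b x, l (mul' a b) x = l a (l b x)) ∧
  (∀ a b x, r (mul' a b) x = r b (r a x)) ∧
  (∀ a b x, l a (r b x) = r b (l a x))

/-- weak*-to-weak* continuity of a map between dual spaces. -/
def WStarCont (f : StrongDual ℝ X → StrongDual ℝ Y) : Prop :=
  ∀ y : Y, Continuous fun φ : WeakDual ℝ X => f φ y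

end Defs

/-- A packaged Banach `A`-bimodule (used to form iterated duals). -/
structure ModPk (A : Type) [NormedAddCommGroup A] [NormedSpace ℝ A] : Type 1 where
  X : Type
  [grp : NormedAddCommGroup X]
  [mod : NormedSpace ℝ X]
  l : A →L[ℝ] X →L[ℝ] X
  r : A →L[ℝ] X →L[ℝ] X

attribute [instance] ModPk.grp ModPk.mod

variable {A : Type} [NormedAddCommGroup A] [NormedSpace ℝ A]

/-- The canonical dual of a packaged bimodule. -/
def ModPk.dual (P : ModPk A) : ModPk A :=
  ⟨StrongDual ℝ P.X, dualAct P.r, dualAct P.l⟩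

/-- The `n`-th iterated dual of a packaged bimodule. -/
def ModPk.iter (P : ModPk A) : ℕ → ModPk A
  | 0 => P
  | n+1 => (P.iter n).dual

/-- A "level": an algebra (given by its bilinear multiplication) together with a bimodule. -/
structure Lvl : Type 1 where
  Alg : Type
  [g1 : NormedAddCommGroup Alg]
  [m1 : NormedSpace ℝ Alg]
  Mod : Type
  [g2 : NormedAddCommGroup Mod]
  [m2 : NormedSpace ℝ Mod]
  mul : Alg →L[ℝ] Alg →L[ℝ] Alg
  l : Alg →L[ℝ] Mod →L[ℝ] Mod
  r : Alg →L[ℝ] Mod →L[ℝ] Mod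

attribute [instance] Lvl.g1 Lvl.m1 Lvl.g2 Lvl.m2

/-- Passing to second duals: `A^{**}` with the first Arens product, acting on `B^{**}`
via the Arens extensions `π_ℓ^{***}` and `π_r^{***}` of the module actions. -/
def Lvl.double (Q : Lvl) : Lvl where
  Alg := StrongDual ℝ (StrongDual ℝ Q.Alg)
  Mod := StrongDual ℝ (StrongDual ℝ Q.Mod)
  mul := arens Q.mul
  l := arens Q.l
  r := (arens Q.r.flip).flip

/-- Iterated even duals: `Lvl.iter Q n` is the level `(A^{(2n)}, B^{(2n)})`. -/
def Lvl.iter (Q : Lvl) : ℕ → Lvl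
  | 0 => Q
  | n+1 => (Q.iter n).double

/-- The canonical embedding `A → A^{(2n)}`. -/
def Lvl.embA (Q : Lvl) : (n : ℕ) → Q.Alg →L[ℝ] (Q.iter n).Alg
  | 0 => ContinuousLinearMap.id ℝ _
  | n+1 => (inclusionInDoubleDual ℝ ((Q.iter n).Alg)).comp (Q.embA n)

/-- The canonical embedding `B → B^{(2n)}`. -/
def Lvl.embM (Q : Lvl) : (n : ℕ) → Q.Mod →L[ℝ] (Q.iter n).Mod
  | 0 => ContinuousLinearMap.id ℝ _
  | n+1 => (inclusionInDoubleDual ℝ ((Q.iter n).Mod)).comp (Q.embM n)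

/-- The left-topological-center condition `Z^ℓ_{A^{(2n+2)}}(B^{(2n+2)}) = B^{(2n+2)}`,
stated at the double of a level `Q`: for each `b` in the second-dual module, the map
`a ↦ b·a` is weak*-to-weak* continuous. -/
def Lvl.doubleZl (Q : Lvl) : Prop :=
  ∀ b : (Q.double).Mod, WStarCont (X := StrongDual ℝ Q.Alg) (Y := StrongDual ℝ Q.Mod)
    (fun a => (Q.double).r a b)

/-- The base level of a Banach algebra `A` with a Banach `A`-bimodule `B`. -/
def lvlOf (A : Type) [NormedRing A] [NormedAlgebra ℝ A]
    (B : Type) [NormedAddCommGroup B] [NormedSpace ℝ B]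
    (l r : A →L[ℝ] B →L[ℝ] B) : Lvl :=
  Lvl.mk A B (ContinuousLinearMap.mul ℝ A) l r

section Aux

variable {A : Type} [NormedAddCommGroup A] [NormedSpace ℝ A]

/-- A strong splitting of the `n`-th dual module over the first dual: a module
retraction `P` with module section `j`, such that moreover the module actions at
level `n` factor through `j ∘ P`. -/
def SplitAt (Q : ModPk A) (n : ℕ) : Prop :=
  ∃ (P : (Q.iter n).X →L[ℝ] (Q.iter 1).X) (j : (Q.iter 1).X →L[ℝ] (Q.iter n).X),
    (∀ (a : A) f, P ((Q.iter n).l a f) = (Q.iter 1).l a (P f)) ∧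
    (∀ (a : A) f, P ((Q.iter n).r a f) = (Q.iter 1).r a (P f)) ∧
    (∀ (a : A) g, j ((Q.iter 1).l a g) = (Q.iter n).l a (j g)) ∧
    (∀ (a : A) g, j ((Q.iter 1).r a g) = (Q.iter n).r a (j g)) ∧
    (∀ g, P (j g) = g) ∧
    (∀ (a : A) f, (Q.iter n).l a f = (Q.iter n).l a (j (P f))) ∧
    (∀ (a : A) f, (Q.iter n).r a f = (Q.iter n).r a (j (P f)))

lemma splitAt_one (Q : ModPk A) : SplitAt Q 1 :=
  ⟨ContinuousLinearMap.id ℝ _, ContinuousLinearMap.id ℝ _,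
    fun _ _ => rfl, fun _ _ => rfl, fun _ _ => rfl, fun _ _ => rfl,
    fun _ => rfl, fun _ _ => rfl, fun _ _ => rfl⟩

section Helpers

variable {X Y : Type} [NormedAddCommGroup X] [NormedSpace ℝ X]
  [NormedAddCommGroup Y] [NormedSpace ℝ Y]

lemma bidual_intertwine (t : A →L[ℝ] X →L[ℝ] X) (s : A →L[ℝ] Y →L[ℝ] Y)
    (T : X →L[ℝ] Y) (h : ∀ a x, T (t a x) = s a (T x)) (a : A)
    (F : StrongDual ℝ (StrongDual ℝ X)) :
    bidualMap T (dualAct (dualAct t) a F) = dualAct (dualAct s) a (bidualMap T F) := by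
  ext g
  show (dualAct (dualAct t) a F) (dualMap' T g) = F (dualMap' T (dualAct s a g))
  rw [dualAct_apply]
  congr 1
  ext x
  simp [h a x]

lemma absorb_bidual (t : A →L[ℝ] X →L[ℝ] X) (π : X →L[ℝ] X)
    (h : ∀ a x, t a x = t a (π x)) (a : A) (F : StrongDual ℝ (StrongDual ℝ X)) :
    dualAct (dualAct t) a F = dualAct (dualAct t) a (bidualMap π F) := by
  ext g
  show F (dualAct t a g) = (bidualMap π F) (dualAct t a g)
  show F (dualAct t a g) = F (dualMap' π (dualAct t a g))
  congr 1
  ext x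
  simp [h a x]

def tripleProj (X : Type) [NormedAddCommGroup X] [NormedSpace ℝ X] :
    StrongDual ℝ (StrongDual ℝ (StrongDual ℝ X)) →L[ℝ] StrongDual ℝ X :=
  dualMap' (X := X) (Y := StrongDual ℝ (StrongDual ℝ X)) (inclusionInDoubleDual ℝ X)

def tripleEmb (X : Type) [NormedAddCommGroup X] [NormedSpace ℝ X] :
    StrongDual ℝ X →L[ℝ] StrongDual ℝ (StrongDual ℝ (StrongDual ℝ X)) :=
  inclusionInDoubleDual ℝ (StrongDual ℝ X)

lemma absorb_incl (s : A →L[ℝ] (StrongDual ℝ (StrongDual ℝ X)) →L[ℝ] (StrongDual ℝ (StrongDual ℝ X)))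
    (hs : ∀ (a : A) (G : StrongDual ℝ (StrongDual ℝ X)), ∃ b : X, s a G = inclusionInDoubleDual ℝ X b)
    (P : StrongDual ℝ (StrongDual ℝ (StrongDual ℝ X)) →L[ℝ] StrongDual ℝ X)
    (hP : ∀ (f : StrongDual ℝ (StrongDual ℝ (StrongDual ℝ X))) (b : X), P f b = f (inclusionInDoubleDual ℝ X b))
    (j : StrongDual ℝ X →L[ℝ] StrongDual ℝ (StrongDual ℝ (StrongDual ℝ X)))
    (hj : ∀ (g : StrongDual ℝ X) (G : StrongDual ℝ (StrongDual ℝ X)), j g G = G g)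
    (a : A) (f : StrongDual ℝ (StrongDual ℝ (StrongDual ℝ X))) (G : StrongDual ℝ (StrongDual ℝ X)) :
    f (s a G) = (j (P f)) (s a G) := by
  obtain ⟨b, hb⟩ := hs a G
  rw [hb, hj, NormedSpace.dual_def, hP]

lemma bidualMap_comp_apply (T : X →L[ℝ] Y) (S : Y →L[ℝ] X)
    (F : StrongDual ℝ (StrongDual ℝ X)) :
    bidualMap (S.comp T) F = bidualMap S (bidualMap T F) := rfl

end Helpers

lemma splitAt_three (Q : ModPk A)
    (hl2 : ∀ (a : A) (G : (Q.iter 2).X),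
      ∃ b : Q.X, (Q.iter 2).l a G = inclusionInDoubleDual ℝ Q.X b)
    (hr2 : ∀ (a : A) (G : (Q.iter 2).X),
      ∃ b : Q.X, (Q.iter 2).r a G = inclusionInDoubleDual ℝ Q.X b) :
    SplitAt Q 3 := by
  refine ⟨tripleProj Q.X, tripleEmb Q.X, ?_, ?_, ?_, ?_, ?_, ?_, ?_⟩
  · intro a f; refine ContinuousLinearMap.ext fun b => ?_; rfl
  · intro a f; refine ContinuousLinearMap.ext fun b => ?_; rfl
  · intro a g; refine ContinuousLinearMap.ext fun G => ?_; rfl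
  · intro a g; refine ContinuousLinearMap.ext fun G => ?_; rfl
  · intro g; refine ContinuousLinearMap.ext fun b => ?_; rfl
  · intro a f
    refine ContinuousLinearMap.ext fun G => ?_
    exact absorb_incl (X := Q.X) (Q.iter 2).r hr2 (tripleProj Q.X)
      (fun _ _ => rfl) (tripleEmb Q.X) (fun _ _ => rfl) a f G
  · intro a f
    refine ContinuousLinearMap.ext fun G => ?_
    exact absorb_incl (X := Q.X) (Q.iter 2).l hl2 (tripleProj Q.X)
      (fun _ _ => rfl) (tripleEmb Q.X) (fun _ _ => rfl) a f G

lemma splitAt_step (Q : ModPk A) (n : ℕ) (h3 : SplitAt Q 3) (hn : SplitAt Q n) :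
    SplitAt Q (n+2) := by
  obtain ⟨P1, j1, hP1l, hP1r, hj1l, hj1r, hPj1, ha1l, ha1r⟩ := h3
  obtain ⟨Pn, jn, hPnl, hPnr, hjnl, hjnr, hPjn, hanl, hanr⟩ := hn
  have keyPl := bidual_intertwine (Q.iter n).l (Q.iter 1).l Pn hPnl
  have keyPr := bidual_intertwine (Q.iter n).r (Q.iter 1).r Pn hPnr
  have keyjl := bidual_intertwine (Q.iter 1).l (Q.iter n).l jn hjnl
  have keyjr := bidual_intertwine (Q.iter 1).r (Q.iter n).r jn hjnr
  have hmid : ∀ H : StrongDual ℝ (StrongDual ℝ ((Q.iter 1).X)),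
      bidualMap Pn (bidualMap jn H) = H := by
    intro H
    ext h
    show H (dualMap' jn (dualMap' Pn h)) = H h
    congr 1
    ext x
    simp [hPjn x]
  refine ⟨P1.comp (bidualMap Pn), (bidualMap jn).comp j1, ?_, ?_, ?_, ?_, ?_, ?_, ?_⟩
  · intro a F
    show P1 (bidualMap Pn (dualAct (dualAct ((Q.iter n).l)) a F))
      = (Q.iter 1).l a (P1 (bidualMap Pn F))
    rw [keyPl a F]
    exact hP1l a (bidualMap Pn F)
  · intro a F
    show P1 (bidualMap Pn (dualAct (dualAct ((Q.iter n).r)) a F))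
      = (Q.iter 1).r a (P1 (bidualMap Pn F))
    rw [keyPr a F]
    exact hP1r a (bidualMap Pn F)
  · intro a g
    show bidualMap jn (j1 ((Q.iter 1).l a g))
      = dualAct (dualAct ((Q.iter n).l)) a (bidualMap jn (j1 g))
    rw [hj1l a g]
    exact keyjl a (j1 g)
  · intro a g
    show bidualMap jn (j1 ((Q.iter 1).r a g))
      = dualAct (dualAct ((Q.iter n).r)) a (bidualMap jn (j1 g))
    rw [hj1r a g]
    exact keyjr a (j1 g)
  · intro g
    show P1 (bidualMap Pn (bidualMap jn (j1 g))) = g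
    rw [hmid (j1 g)]
    exact hPj1 g
  · intro a F
    calc (show StrongDual ℝ (StrongDual ℝ (Q.iter n).X) from (Q.iter (n+2)).l a F)
        = dualAct (dualAct ((Q.iter n).l)) a (bidualMap (jn.comp Pn) F) :=
          absorb_bidual (Q.iter n).l (jn.comp Pn) (fun a x => hanl a x) a F
      _ = dualAct (dualAct ((Q.iter n).l)) a (bidualMap jn (bidualMap Pn F)) := rfl
      _ = bidualMap jn (dualAct (dualAct ((Q.iter 1).l)) a (bidualMap Pn F)) :=
          (keyjl a (bidualMap Pn F)).symm
      _ = bidualMap jn ((Q.iter 3).l a (j1 (P1 (bidualMap Pn F)))) :=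
          congrArg _ (ha1l a (bidualMap Pn F))
      _ = (show StrongDual ℝ (StrongDual ℝ (Q.iter n).X) from (Q.iter (n+2)).l a (((bidualMap jn).comp j1) ((P1.comp (bidualMap Pn)) F))) :=
          keyjl a (j1 (P1 (bidualMap Pn F)))
  · intro a F
    calc (show StrongDual ℝ (StrongDual ℝ (Q.iter n).X) from (Q.iter (n+2)).r a F)
        = dualAct (dualAct ((Q.iter n).r)) a (bidualMap (jn.comp Pn) F) :=
          absorb_bidual (Q.iter n).r (jn.comp Pn) (fun a x => hanr a x) a F
      _ = dualAct (dualAct ((Q.iter n).r)) a (bidualMap jn (bidualMap Pn F)) := rfl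
      _ = bidualMap jn (dualAct (dualAct ((Q.iter 1).r)) a (bidualMap Pn F)) :=
          (keyjr a (bidualMap Pn F)).symm
      _ = bidualMap jn ((Q.iter 3).r a (j1 (P1 (bidualMap Pn F)))) :=
          congrArg _ (ha1r a (bidualMap Pn F))
      _ = (show StrongDual ℝ (StrongDual ℝ (Q.iter n).X) from (Q.iter (n+2)).r a (((bidualMap jn).comp j1) ((P1.comp (bidualMap Pn)) F))) :=
          keyjr a (j1 (P1 (bidualMap Pn F)))

lemma splitAt_odd (Q : ModPk A)
    (hl2 : ∀ (a : A) (G : (Q.iter 2).X),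
      ∃ b : Q.X, (Q.iter 2).l a G = inclusionInDoubleDual ℝ Q.X b)
    (hr2 : ∀ (a : A) (G : (Q.iter 2).X),
      ∃ b : Q.X, (Q.iter 2).r a G = inclusionInDoubleDual ℝ Q.X b) :
    ∀ n : ℕ, SplitAt Q (2*n+1) := by
  intro n
  induction n with
  | zero => exact splitAt_one Q
  | succ m ih =>
      have e : 2*(m+1)+1 = (2*m+1)+2 := by ring
      rw [e]
      exact splitAt_step Q _ (splitAt_three Q hl2 hr2) ih

lemma isBimod_dualAct {A' : Type} [NormedAddCommGroup A'] [NormedSpace ℝ A']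
    {X : Type} [NormedAddCommGroup X] [NormedSpace ℝ X]
    (mul' : A' →L[ℝ] A' →L[ℝ] A') (l r : A' →L[ℝ] X →L[ℝ] X)
    (h : IsBimod mul' l r) : IsBimod mul' (dualAct r) (dualAct l) := by
  obtain ⟨h1, h2, h3⟩ := h
  refine ⟨?_, ?_, ?_⟩ <;> intro a b f <;> ext x
  · simp [h2 a b x]
  · simp [h1 a b x]
  · simp [h3 b a x]

lemma isBimod_iter {A' : Type} [NormedAddCommGroup A'] [NormedSpace ℝ A']
    (mul' : A' →L[ℝ] A' →L[ℝ] A') (Q : ModPk A')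
    (h : IsBimod mul' Q.l Q.r) : ∀ k : ℕ, IsBimod mul' (Q.iter k).l (Q.iter k).r := by
  intro k
  induction k with
  | zero => exact h
  | succ m ih => exact isBimod_dualAct mul' (Q.iter m).l (Q.iter m).r ih

lemma derInner {A' : Type} [NormedRing A'] [NormedAlgebra ℝ A']
    (Q : ModPk A') (k : ℕ)
    (hbim : IsBimod (ContinuousLinearMap.mul ℝ A') Q.l Q.r)
    (hBLAI : ∃ (ι : Type) (F : Filter ι) (e : ι → A'), F.NeBot ∧
      (∃ C : ℝ, ∀ i, ‖e i‖ ≤ C) ∧ ∀ a : A', Filter.Tendsto (fun i => e i * a) F (nhds a))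
    (h1 : ∀ D : A' →L[ℝ] (Q.iter 1).X,
      IsDer (ContinuousLinearMap.mul ℝ A') (Q.iter 1).l (Q.iter 1).r D →
      IsInner (Q.iter 1).l (Q.iter 1).r D)
    (hs : SplitAt Q k)
    (D : A' →L[ℝ] (Q.iter k).X)
    (hD : IsDer (ContinuousLinearMap.mul ℝ A') (Q.iter k).l (Q.iter k).r D) :
    IsInner (Q.iter k).l (Q.iter k).r D := by
  obtain ⟨P, j, hPl, hPr, hjl, hjr, hPj, hal, har⟩ := hs
  obtain ⟨hb1, hb2, hb3⟩ := isBimod_iter (ContinuousLinearMap.mul ℝ A') Q hbim k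
  have hD' : IsDer (ContinuousLinearMap.mul ℝ A') (Q.iter 1).l (Q.iter 1).r (P.comp D) := by
    intro a b
    show P (D _) = _
    rw [hD a b, map_add, hPl, hPr]
    rfl
  obtain ⟨x, hx⟩ := h1 _ hD'
  refine ⟨j x, ?_⟩
  set L := (Q.iter k).l with hL
  set R := (Q.iter k).r with hR
  set E : A' →L[ℝ] (Q.iter k).X := D - (L.flip (j x) - R.flip (j x)) with hE
  have hEapp : ∀ c : A', E c = D c - (L c (j x) - R c (j x)) := by
    intro c
    simp [hE, ContinuousLinearMap.sub_apply, ContinuousLinearMap.flip_apply]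
  have hEP : ∀ c : A', P (E c) = 0 := by
    intro c
    rw [hEapp, map_sub, map_sub, hPl, hPr, hPj]
    have hxc : P (D c) = (Q.iter 1).l c x - (Q.iter 1).r c x := hx c
    rw [hxc]
    abel
  have hLE : ∀ (a c : A'), L a (E c) = 0 := by
    intro a c
    rw [hal a (E c), hEP, map_zero, map_zero]
  have hRE : ∀ (a c : A'), R a (E c) = 0 := by
    intro a c
    rw [har a (E c), hEP, map_zero, map_zero]
  have hE0 : ∀ a b : A', E (a * b) = 0 := by
    intro a b
    have hDab : D (a * b) = L a (D b) + R b (D a) := hD a b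
    have h1' : L (a * b) (j x) = L a (L b (j x)) := hb1 a b (j x)
    have h2' : R (a * b) (j x) = R b (R a (j x)) := hb2 a b (j x)
    have hcomm : L a (R b (j x)) = R b (L a (j x)) := hb3 a b (j x)
    have expand : E (a * b) = L a (E b) + R b (E a) := by
      rw [hEapp, hEapp, hEapp, hDab, h1', h2', map_sub, map_sub, map_sub, map_sub, hcomm]
      abel
    rw [expand, hLE, hRE, add_zero]
  obtain ⟨ι, F, e, hne, _, hconv⟩ := hBLAI
  haveI := hne
  have hEz : ∀ a : A', E a = 0 := by
    intro a
    have ht1 : Filter.Tendsto (fun i => E (e i * a)) F (nhds (E a)) :=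
      (E.continuous.tendsto a).comp (hconv a)
    have ht2 : Filter.Tendsto (fun i => E (e i * a)) F (nhds 0) := by
      simp only [hE0]
      exact tendsto_const_nhds
    exact tendsto_nhds_unique ht1 ht2
  intro a
  have hz := hEz a
  rw [hEapp] at hz
  rw [sub_eq_zero] at hz
  exact hz

end Aux

/-- **Corollary 2-6 (i).** Let `A` be a Banach algebra with a bounded left approximate
identity, and `B` a Banach `A`-bimodule with `A·B** ⊆ B` and `B**·A ⊆ B`. If every
continuous derivation `A → B*` is inner, then for each `n ≥ 0` every continuous
derivation `A → B^(2n+1)` is inner. -/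
theorem stmt5 (A : Type) [NormedRing A] [NormedAlgebra ℝ A] [CompleteSpace A]
    (B : Type) [NormedAddCommGroup B] [NormedSpace ℝ B] [CompleteSpace B]
    (l r : A →L[ℝ] B →L[ℝ] B)
    (hbim : IsBimod (ContinuousLinearMap.mul ℝ A) l r)
    -- `A` has a bounded left approximate identity
    (hBLAI : ∃ (ι : Type) (F : Filter ι) (e : ι → A), F.NeBot ∧
      (∃ C : ℝ, ∀ i, ‖e i‖ ≤ C) ∧ ∀ a : A, Filter.Tendsto (fun i => e i * a) F (nhds a))
    -- `A·B** ⊆ B` and `B**·A ⊆ B`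
    (hl2 : ∀ (a : A) (G : ((ModPk.mk B l r).iter 2).X),
      ∃ b : B, ((ModPk.mk B l r).iter 2).l a G = inclusionInDoubleDual ℝ B b)
    (hr2 : ∀ (a : A) (G : ((ModPk.mk B l r).iter 2).X),
      ∃ b : B, ((ModPk.mk B l r).iter 2).r a G = inclusionInDoubleDual ℝ B b)
    -- `H¹(A, B*) = 0`
    (h1 : ∀ D : A →L[ℝ] ((ModPk.mk B l r).iter 1).X,
      IsDer (ContinuousLinearMap.mul ℝ A) ((ModPk.mk B l r).iter 1).l ((ModPk.mk B l r).iter 1).r D →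
      IsInner ((ModPk.mk B l r).iter 1).l ((ModPk.mk B l r).iter 1).r D) :
    -- `H¹(A, B^(2n+1)) = 0` for every `n`
    ∀ (n : ℕ) (D : A →L[ℝ] ((ModPk.mk B l r).iter (2*n+1)).X),
      IsDer (ContinuousLinearMap.mul ℝ A) ((ModPk.mk B l r).iter (2*n+1)).l
        ((ModPk.mk B l r).iter (2*n+1)).r D →
      IsInner ((ModPk.mk B l r).iter (2*n+1)).l ((ModPk.mk B l r).iter (2*n+1)).r D := by
  intro n D hD
  exact derInner (ModPk.mk B l r) (2*n+1) hbim hBLAI h1 (splitAt_odd (ModPk.mk B l r) hl2 hr2 n) D hD
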